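/- Let Q = {ρe^{iψ} : ρ > 0, ψ ∈ (0, π/2)} be the open first quadrant in ℂ. Suppose g is analytic on Q and continuous on its closure, and for constants C > 0, a > 0, m ≥ 0 satisfies |g(z)| ≤ C·e^{a(Re z)²}(1+|z|)^m for all z in the closure of Q, and ∫₀^∞ |g(x)|^p dx < ∞ for some p ∈ [1,∞). Then there is a constant C' such that for all ψ ∈ [0, π/2] and all σ > 0, ∫_σ^{σ+1} |g(ρe^{iψ})| dρ ≤ C' · max{e^a, (σ+1)^{1/p}} · (σ+2)^{2m}. -/

import Mathlib

open Complex MeasureTheory Real Set Metric Topology Filter Asymptotics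

namespace PLQuad

/-- pointwise Young inequality: `t ≤ λ^{1-p} t^p + λ` for `p ≥ 1`. -/
lemma young_pt {t lam p : ℝ} (ht : 0 ≤ t) (hlam : 0 < lam) (hp : 1 ≤ p) :
    t ≤ lam ^ (1 - p) * t ^ p + lam := by
  rcases le_or_gt t lam with h | h
  · have : (0:ℝ) ≤ lam ^ (1 - p) * t ^ p :=
      mul_nonneg (Real.rpow_nonneg hlam.le _) (Real.rpow_nonneg ht _)
    linarith
  · have ht0 : 0 < t := hlam.trans h
    have h1 : t ^ (1 - p) ≤ lam ^ (1 - p) :=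
      Real.rpow_le_rpow_of_nonpos hlam h.le (by linarith)
    have h2 : t = t ^ p * t ^ (1 - p) := by
      rw [← Real.rpow_add ht0, add_sub_cancel, Real.rpow_one]
    have h3 : t ^ p * t ^ (1 - p) ≤ t ^ p * lam ^ (1 - p) :=
      mul_le_mul_of_nonneg_left h1 (Real.rpow_nonneg ht0.le _)
    nlinarith [Real.rpow_nonneg ht0.le p, Real.rpow_nonneg hlam.le (1-p)]

/-- Hölder-type estimate with explicit constant, via Young's inequality. -/
lemma young_seg {p : ℝ} (hp : 1 ≤ p) (h : ℂ → ℂ)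
    (hcont : ContinuousOn h {z : ℂ | 0 ≤ z.re ∧ 0 ≤ z.im})
    (hint : IntegrableOn (fun x : ℝ => ‖h (x:ℂ)‖ ^ p) (Ioi (0:ℝ)))
    {c d : ℝ} (hc : 0 ≤ c) (hcd : c < d) :
    (∫ u in Ioc c d, ‖h (u:ℂ)‖) ≤
      2 * ((∫ x in Ioi (0:ℝ), ‖h (x:ℂ)‖ ^ p) + 1) ^ (1/p) * (d - c) ^ (1 - 1/p) := by
  have hp0 : 0 < p := lt_of_lt_of_le one_pos hp
  set M₁ : ℝ := ∫ x in Ioi (0:ℝ), ‖h (x:ℂ)‖ ^ p with hM₁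
  have hM₁0 : 0 ≤ M₁ := by
    apply setIntegral_nonneg measurableSet_Ioi
    intro x _; positivity
  set K : ℝ := M₁ + 1 with hK
  have hK0 : 0 < K := by positivity
  set L : ℝ := d - c with hL
  have hL0 : 0 < L := by simp [hL]; linarith
  set lam : ℝ := (K / L) ^ (1/p) with hlamdef
  have hlam0 : 0 < lam := Real.rpow_pos_of_pos (div_pos hK0 hL0) _
  -- continuity facts
  have hsub : Ioc c d ⊆ Ioi (0:ℝ) := fun x hx => lt_of_le_of_lt hc hx.1
  have hcont' : ContinuousOn (fun u : ℝ => ‖h (u:ℂ)‖) (Icc c d) := by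
    apply (hcont.comp Complex.continuous_ofReal.continuousOn ?_).norm
    intro x hx
    exact ⟨by simpa using (hc.trans hx.1), by simp⟩
  have hintg : IntegrableOn (fun u : ℝ => ‖h (u:ℂ)‖) (Ioc c d) :=
    (hcont'.integrableOn_Icc).mono_set Ioc_subset_Icc_self
  have hintp : IntegrableOn (fun u : ℝ => ‖h (u:ℂ)‖ ^ p) (Ioc c d) :=
    hint.mono_set hsub
  -- pointwise bound and integrate
  have step1 : (∫ u in Ioc c d, ‖h (u:ℂ)‖) ≤
      ∫ u in Ioc c d, (lam ^ (1 - p) * ‖h (u:ℂ)‖ ^ p + lam) := by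
    apply setIntegral_mono_on hintg
      ((hintp.const_mul _).add (integrableOn_const measure_Ioc_lt_top.ne))
      measurableSet_Ioc
    intro x _
    exact young_pt (norm_nonneg _) hlam0 hp
  have step2 : (∫ u in Ioc c d, (lam ^ (1 - p) * ‖h (u:ℂ)‖ ^ p + lam))
      = lam ^ (1 - p) * (∫ u in Ioc c d, ‖h (u:ℂ)‖ ^ p) + lam * L := by
    rw [integral_add (hintp.const_mul _) (integrableOn_const measure_Ioc_lt_top.ne),
      integral_const_mul, setIntegral_const]
    simp [hL, Real.volume_real_Ioc_of_le (by linarith : c ≤ d), ENNReal.toReal_ofReal (by linarith : (0:ℝ) ≤ d - c),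
      smul_eq_mul, mul_comm]
  have step3 : (∫ u in Ioc c d, ‖h (u:ℂ)‖ ^ p) ≤ K := by
    have : (∫ u in Ioc c d, ‖h (u:ℂ)‖ ^ p) ≤ M₁ := by
      apply setIntegral_mono_set hint
      · filter_upwards with x; positivity
      · exact HasSubset.Subset.eventuallyLE hsub
    linarith
  -- final algebra
  have hKL : ∀ t : ℝ, (K/L) ^ t = K ^ t * L ^ (-t) := fun t => by
    rw [Real.div_rpow hK0.le hL0.le, Real.rpow_neg hL0.le, div_eq_mul_inv]
  have hpne : p ≠ 0 := ne_of_gt hp0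
  have ha1 : (1/p) * (1-p) = 1/p - 1 := by field_simp
  have key : lam ^ (1 - p) * K + lam * L = 2 * K ^ (1/p) * L ^ (1 - 1/p) := by
    have e1 : lam ^ (1 - p) = K ^ (1/p - 1) * L ^ (1 - 1/p) := by
      rw [hlamdef, ← Real.rpow_mul (div_pos hK0 hL0).le, hKL, ha1]
      ring_nf
    have e2 : K ^ (1/p - 1) * K = K ^ (1/p) := by
      nth_rewrite 2 [← Real.rpow_one K]
      rw [← Real.rpow_add hK0]; ring_nf
    have e3 : lam * L = K ^ (1/p) * L ^ (1 - 1/p) := by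
      rw [hlamdef, hKL]
      nth_rewrite 2 [← Real.rpow_one L]
      rw [mul_assoc, ← Real.rpow_add hL0]
      ring_nf
    calc lam ^ (1 - p) * K + lam * L
        = K ^ (1/p - 1) * K * L ^ (1 - 1/p) + lam * L := by rw [e1]; ring
      _ = 2 * K ^ (1/p) * L ^ (1 - 1/p) := by rw [e2, e3]; ring
  calc (∫ u in Ioc c d, ‖h (u:ℂ)‖)
      ≤ lam ^ (1 - p) * (∫ u in Ioc c d, ‖h (u:ℂ)‖ ^ p) + lam * L := by
        rw [← step2]; exact step1
    _ ≤ lam ^ (1 - p) * K + lam * L := by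
        have := Real.rpow_nonneg hlam0.le (1 - p)
        nlinarith [step3]
    _ = 2 * K ^ (1/p) * L ^ (1 - 1/p) := key

variable {g : ℂ → ℂ} {σ : ℝ} {φ : ℝ → ℂ}

lemma mul_mem_Qc {ρ : ℝ} (hρ : 0 ≤ ρ) {w : ℂ} (hw : 0 ≤ w.re ∧ 0 ≤ w.im) :
    0 ≤ ((ρ:ℂ) * w).re ∧ 0 ≤ ((ρ:ℂ) * w).im := by
  simp only [Complex.mul_re, Complex.mul_im, Complex.ofReal_re, Complex.ofReal_im]
  constructor <;> nlinarith [hw.1, hw.2]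

lemma mul_mem_Qo {ρ : ℝ} (hρ : 0 < ρ) {w : ℂ} (hw : 0 < w.re ∧ 0 < w.im) :
    0 < ((ρ:ℂ) * w).re ∧ 0 < ((ρ:ℂ) * w).im := by
  simp only [Complex.mul_re, Complex.mul_im, Complex.ofReal_re, Complex.ofReal_im]
  constructor <;> nlinarith [hw.1, hw.2]

lemma phi_cont (hcont : ContinuousOn g {z : ℂ | 0 ≤ z.re ∧ 0 ≤ z.im})
    (hσ : 0 < σ) (hφm : AEStronglyMeasurable φ (volume.restrict (Ioc σ (σ+1))))
    (hφ1 : ∀ ρ, ‖φ ρ‖ ≤ 1) :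
    ContinuousOn (fun w => ∫ ρ in Ioc σ (σ+1), φ ρ * g ((ρ:ℂ) * w))
      {z : ℂ | 0 ≤ z.re ∧ 0 ≤ z.im} := by
  set Qc : Set ℂ := {z : ℂ | 0 ≤ z.re ∧ 0 ≤ z.im} with hQc
  have hQcc : IsClosed Qc := (isClosed_le continuous_const Complex.continuous_re).inter
    (isClosed_le continuous_const Complex.continuous_im)
  intro w₀ hw₀
  -- compact set of relevant points
  set K : Set ℂ := (fun q : ℝ × ℂ => (q.1:ℂ) * q.2) '' (Icc σ (σ+1) ×ˢ (Qc ∩ closedBall w₀ 1))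
    with hKdef
  have hKcomp : IsCompact K := by
    apply IsCompact.image
    · exact isCompact_Icc.prod ((isCompact_closedBall w₀ 1).inter_left hQcc)
    · exact (Complex.continuous_ofReal.comp continuous_fst).mul continuous_snd
  have hKQ : K ⊆ Qc := by
    rintro z ⟨⟨ρ, w⟩, ⟨hρ, hw⟩, rfl⟩
    exact mul_mem_Qc (hσ.trans_le hρ.1).le hw.1
  obtain ⟨Cb, hCb⟩ := hKcomp.exists_bound_of_continuousOn (hcont.mono hKQ)
  apply continuousWithinAt_of_dominated (bound := fun _ => Cb)
  · -- measurability, eventually in 𝓝[Qc] w₀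
    filter_upwards [self_mem_nhdsWithin] with w hw
    apply AEStronglyMeasurable.mul hφm
    apply ContinuousOn.aestronglyMeasurable ?_ measurableSet_Ioc
    apply hcont.comp ((Complex.continuous_ofReal.mul continuous_const).continuousOn)
    intro ρ hρ
    exact mul_mem_Qc (hσ.trans hρ.1).le hw
  · -- domination
    have hball : Qc ∩ closedBall w₀ 1 ∈ 𝓝[Qc] w₀ :=
      Filter.inter_mem self_mem_nhdsWithin
        (mem_nhdsWithin_of_mem_nhds (closedBall_mem_nhds w₀ one_pos))
    filter_upwards [hball] with w hw
    filter_upwards [ae_restrict_mem measurableSet_Ioc] with ρ hρ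
    have hmem : (ρ:ℂ) * w ∈ K :=
      ⟨(ρ, w), ⟨Ioc_subset_Icc_self hρ, hw⟩, rfl⟩
    calc ‖φ ρ * g ((ρ:ℂ) * w)‖ = ‖φ ρ‖ * ‖g ((ρ:ℂ) * w)‖ := norm_mul _ _
      _ ≤ 1 * Cb := mul_le_mul (hφ1 ρ) (hCb _ hmem) (norm_nonneg _) zero_le_one
      _ = Cb := one_mul _
  · exact integrableOn_const measure_Ioc_lt_top.ne
  · -- continuity in w for fixed ρ
    filter_upwards [ae_restrict_mem measurableSet_Ioc] with ρ hρ
    have hmem : (ρ:ℂ) * w₀ ∈ Qc := mul_mem_Qc (hσ.trans hρ.1).le hw₀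
    have h1 : ContinuousWithinAt (fun w : ℂ => g ((ρ:ℂ) * w)) Qc w₀ := by
      apply (hcont _ hmem).comp ((continuous_const.mul continuous_id).continuousWithinAt)
      intro x hx
      exact mul_mem_Qc (hσ.trans hρ.1).le hx
    exact continuousWithinAt_const.mul h1


lemma phi_diff (hanal : DifferentiableOn ℂ g {z : ℂ | 0 < z.re ∧ 0 < z.im})
    (hcont : ContinuousOn g {z : ℂ | 0 ≤ z.re ∧ 0 ≤ z.im})
    (hσ : 0 < σ) (hφm : AEStronglyMeasurable φ (volume.restrict (Ioc σ (σ+1))))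
    (hφ1 : ∀ ρ, ‖φ ρ‖ ≤ 1) :
    DifferentiableOn ℂ (fun w => ∫ ρ in Ioc σ (σ+1), φ ρ * g ((ρ:ℂ) * w))
      {z : ℂ | 0 < z.re ∧ 0 < z.im} := by
  set Qo : Set ℂ := {z : ℂ | 0 < z.re ∧ 0 < z.im} with hQo
  have hQoo : IsOpen Qo := (isOpen_lt continuous_const Complex.continuous_re).inter
    (isOpen_lt continuous_const Complex.continuous_im)
  intro w₀ hw₀
  set r : ℝ := min w₀.re w₀.im / 2 with hr
  have hr0 : 0 < r := by
    have := hw₀.1; have := hw₀.2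
    have : 0 < min w₀.re w₀.im := lt_min hw₀.1 hw₀.2
    positivity
  have hballQ : ∀ w ∈ closedBall w₀ r, w ∈ Qo := by
    intro w hw
    rw [mem_closedBall, Complex.dist_eq] at hw
    have h1 : |(w - w₀).re| ≤ r := (Complex.abs_re_le_norm _).trans hw
    have h2 : |(w - w₀).im| ≤ r := (Complex.abs_im_le_norm _).trans hw
    rw [Complex.sub_re] at h1; rw [Complex.sub_im] at h2
    have h3 : r ≤ w₀.re / 2 := by
      rw [hr]; have := min_le_left w₀.re w₀.im; linarith
    have h4 : r ≤ w₀.im / 2 := by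
      rw [hr]; have := min_le_right w₀.re w₀.im; linarith
    constructor
    · have h5 := (abs_le.1 h1).1; have h6 := hw₀.1
      show 0 < w.re; linarith
    · have h5 := (abs_le.1 h2).1; have h6 := hw₀.2
      show 0 < w.im; linarith
  -- the compact set containing all points ρ * w
  set K : Set ℂ := (fun q : ℝ × ℂ => (q.1:ℂ) * q.2) '' (Icc σ (σ+1) ×ˢ closedBall w₀ r)
    with hK
  have hKcomp : IsCompact K :=
    (isCompact_Icc.prod (isCompact_closedBall w₀ r)).image
      ((Complex.continuous_ofReal.comp continuous_fst).mul continuous_snd)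
  have hKQ : K ⊆ Qo := by
    rintro z ⟨⟨ρ, w⟩, ⟨hρ, hw⟩, rfl⟩
    exact mul_mem_Qo (hσ.trans_le hρ.1) (hballQ w hw)
  -- bound on the derivative of g on K
  have hderiv_cont : ContinuousOn (deriv g) Qo := by
    have := (hanal.analyticOnNhd hQoo).deriv
    exact this.continuousOn
  obtain ⟨Cb, hCb⟩ := hKcomp.exists_bound_of_continuousOn (hderiv_cont.mono hKQ)
  -- apply the parametric differentiation theorem
  have main := hasDerivAt_integral_of_dominated_loc_of_deriv_le
    (F := fun (w : ℂ) (ρ : ℝ) => φ ρ * g ((ρ:ℂ) * w))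
    (F' := fun (w : ℂ) (ρ : ℝ) => φ ρ * (deriv g ((ρ:ℂ) * w) * (ρ:ℂ)))
    (x₀ := w₀) (s := ball w₀ r) (bound := fun _ => (σ+1+1) * Cb)
    (μ := volume.restrict (Ioc σ (σ+1))) (ball_mem_nhds w₀ hr0) ?_ ?_ ?_ ?_ ?_ ?_
  · exact main.2.differentiableAt.differentiableWithinAt
  · -- measurability nearby
    filter_upwards [hQoo.mem_nhds hw₀] with w hw
    apply AEStronglyMeasurable.mul hφm
    apply ContinuousOn.aestronglyMeasurable ?_ measurableSet_Ioc
    apply hcont.comp ((Complex.continuous_ofReal.mul continuous_const).continuousOn)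
    intro ρ hρ
    have := mul_mem_Qo (hσ.trans hρ.1) hw
    exact ⟨this.1.le, this.2.le⟩
  · -- integrability at w₀
    have hgc : ContinuousOn (fun ρ : ℝ => g ((ρ:ℂ) * w₀)) (Icc σ (σ+1)) := by
      apply hcont.comp ((Complex.continuous_ofReal.mul continuous_const).continuousOn)
      intro ρ hρ
      have := mul_mem_Qo (hσ.trans_le hρ.1) hw₀
      exact ⟨this.1.le, this.2.le⟩
    have hgint : IntegrableOn (fun ρ : ℝ => g ((ρ:ℂ) * w₀)) (Ioc σ (σ+1)) :=
      (hgc.integrableOn_Icc).mono_set Ioc_subset_Icc_self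
    apply Integrable.mono' hgint.integrable.norm
    · apply AEStronglyMeasurable.mul hφm
      exact hgint.integrable.aestronglyMeasurable
    · filter_upwards with ρ
      rw [norm_mul]
      exact mul_le_of_le_one_left (norm_nonneg _) (hφ1 ρ)
  · -- measurability of F' at w₀
    apply AEStronglyMeasurable.mul hφm
    apply ContinuousOn.aestronglyMeasurable ?_ measurableSet_Ioc
    apply ContinuousOn.mul ?_ (Complex.continuous_ofReal.continuousOn)
    apply hderiv_cont.comp ((Complex.continuous_ofReal.mul continuous_const).continuousOn)
    intro ρ hρ
    exact mul_mem_Qo (hσ.trans hρ.1) hw₀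
  · -- bound on F'
    filter_upwards [ae_restrict_mem measurableSet_Ioc] with ρ hρ
    intro w hw
    have hmem : (ρ:ℂ) * w ∈ K := ⟨(ρ, w), ⟨Ioc_subset_Icc_self hρ, ball_subset_closedBall hw⟩, rfl⟩
    have hρb : |ρ| ≤ σ + 1 := by
      rw [abs_of_pos (hσ.trans hρ.1)]; exact hρ.2
    calc ‖φ ρ * (deriv g ((ρ:ℂ) * w) * (ρ:ℂ))‖
        = ‖φ ρ‖ * (‖deriv g ((ρ:ℂ) * w)‖ * |ρ|) := by
          rw [norm_mul, norm_mul, Complex.norm_real, Real.norm_eq_abs]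
      _ ≤ 1 * (Cb * (σ+1)) := by
          apply mul_le_mul (hφ1 ρ) ?_ (by positivity) zero_le_one
          apply mul_le_mul (hCb _ hmem) hρb (abs_nonneg _)
            (le_trans (norm_nonneg _) (hCb _ hmem))
      _ ≤ (σ+1+1) * Cb := by
          have hCb0 : 0 ≤ Cb := le_trans (norm_nonneg _) (hCb _ hmem)
          nlinarith
  · exact integrableOn_const measure_Ioc_lt_top.ne
  · -- differentiability in w
    filter_upwards [ae_restrict_mem measurableSet_Ioc] with ρ hρ
    intro w hw
    have hmem : (ρ:ℂ) * w ∈ Qo := mul_mem_Qo (hσ.trans hρ.1) (hballQ w (ball_subset_closedBall hw))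
    have hg : HasDerivAt g (deriv g ((ρ:ℂ) * w)) ((ρ:ℂ) * w) :=
      (hanal.differentiableAt (hQoo.mem_nhds hmem)).hasDerivAt
    have hl : HasDerivAt (fun w : ℂ => (ρ:ℂ) * w) (ρ:ℂ) w := by
      simpa using (hasDerivAt_id w).const_mul (ρ:ℂ)
    have := hg.comp w hl
    exact this.const_mul (φ ρ)


section Key

variable {g : ℂ → ℂ} {C a m p : ℝ}

/-- Pointwise-to-integral bound on a segment of a ray. -/
lemma gseg_bound (hC : 0 < C) (ha : 0 < a) (hm : 0 ≤ m)
    (hcont : ContinuousOn g {z : ℂ | 0 ≤ z.re ∧ 0 ≤ z.im})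
    (hbound : ∀ z : ℂ, 0 ≤ z.re → 0 ≤ z.im →
      ‖g z‖ ≤ C * Real.exp (a * z.re ^ 2) * (1 + ‖z‖) ^ m)
    {σ : ℝ} (hσ : 0 < σ) {w : ℂ} (hw1 : 0 ≤ w.re) (hw2 : 0 ≤ w.im) :
    (∫ ρ in Ioc σ (σ+1), ‖g ((ρ:ℂ) * w)‖) ≤
      C * Real.exp (a * (σ+1)^2 * w.re^2) * (1 + (σ+1) * ‖w‖) ^ m := by
  have hgc : ContinuousOn (fun ρ : ℝ => ‖g ((ρ:ℂ) * w)‖) (Icc σ (σ+1)) := by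
    apply ContinuousOn.norm
    apply hcont.comp ((Complex.continuous_ofReal.mul continuous_const).continuousOn)
    intro ρ hρ
    exact mul_mem_Qc (hσ.trans_le hρ.1).le ⟨hw1, hw2⟩
  have hgint : IntegrableOn (fun ρ : ℝ => ‖g ((ρ:ℂ) * w)‖) (Ioc σ (σ+1)) :=
    (hgc.integrableOn_Icc).mono_set Ioc_subset_Icc_self
  have hpt : ∀ ρ ∈ Ioc σ (σ+1), ‖g ((ρ:ℂ) * w)‖ ≤
      C * Real.exp (a * (σ+1)^2 * w.re^2) * (1 + (σ+1) * ‖w‖) ^ m := by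
    intro ρ hρ
    have hρ0 : 0 < ρ := hσ.trans hρ.1
    have hρ1 : ρ ≤ σ + 1 := hρ.2
    have hmem := mul_mem_Qc hρ0.le (⟨hw1, hw2⟩ : 0 ≤ w.re ∧ 0 ≤ w.im)
    have h1 := hbound _ hmem.1 hmem.2
    have hre : ((ρ:ℂ) * w).re = ρ * w.re := by
      simp [Complex.mul_re]
    have hnorm : ‖(ρ:ℂ) * w‖ = ρ * ‖w‖ := by
      rw [norm_mul, Complex.norm_real, Real.norm_eq_abs, abs_of_pos hρ0]
    rw [hre, hnorm] at h1
    refine h1.trans ?_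
    have e1 : a * (ρ * w.re)^2 ≤ a * (σ+1)^2 * w.re^2 := by
      have hsq : ρ^2 ≤ (σ+1)^2 := by nlinarith
      have h := mul_le_mul_of_nonneg_left
        (mul_le_mul_of_nonneg_right hsq (sq_nonneg w.re)) ha.le
      nlinarith [h]
    have e2 : (1 + ρ * ‖w‖ : ℝ) ^ m ≤ (1 + (σ+1) * ‖w‖) ^ m := by
      apply Real.rpow_le_rpow (by positivity) ?_ hm
      nlinarith [norm_nonneg w]
    have e3 : Real.exp (a * (ρ * w.re)^2) ≤ Real.exp (a * (σ+1)^2 * w.re^2) :=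
      Real.exp_le_exp.2 e1
    exact mul_le_mul (mul_le_mul le_rfl e3 (by positivity) hC.le) e2 (by positivity)
      (by positivity)
  calc (∫ ρ in Ioc σ (σ+1), ‖g ((ρ:ℂ) * w)‖)
      ≤ ∫ _ρ in Ioc σ (σ+1), C * Real.exp (a * (σ+1)^2 * w.re^2) * (1 + (σ+1) * ‖w‖) ^ m :=
        setIntegral_mono_on hgint (integrableOn_const measure_Ioc_lt_top.ne)
          measurableSet_Ioc hpt
    _ = C * Real.exp (a * (σ+1)^2 * w.re^2) * (1 + (σ+1) * ‖w‖) ^ m := by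
        rw [setIntegral_const]
        rw [Real.volume_real_Ioc]
        norm_num

/-- geometry of `1 + w` for `w` in the closed quadrant (actually `0 ≤ re w` suffices). -/
lemma one_add_facts {w : ℂ} (hw : 0 ≤ w.re) :
    1 ≤ ‖1 + w‖ ∧ ‖w‖ ≤ ‖1 + w‖ ∧ 1 + ‖w‖ ≤ 2 * ‖1 + w‖ := by
  have h0 : ‖1 + w‖ ^ 2 = (1 + w.re)^2 + w.im^2 := by
    rw [Complex.sq_norm, Complex.normSq_apply]
    simp [Complex.add_re, Complex.add_im]
    ring
  have hn0 : 0 ≤ ‖1 + w‖ := norm_nonneg _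
  have hw0 : 0 ≤ ‖w‖ := norm_nonneg _
  have hw2 : ‖w‖^2 = w.re^2 + w.im^2 := by
    rw [Complex.sq_norm, Complex.normSq_apply]; ring
  have h1 : 1 ≤ ‖1 + w‖ := by nlinarith
  have h2 : ‖w‖ ≤ ‖1 + w‖ := by nlinarith
  exact ⟨h1, h2, by linarith⟩

set_option maxHeartbeats 3000000 in
/-- Key Phragmén–Lindelöf estimate on `[0, arctan((σ+1)²/2)]`. -/
lemma key (hC : 0 < C) (ha : 0 < a) (hm : 0 ≤ m) (hp : 1 ≤ p)
    (hanal : DifferentiableOn ℂ g {z : ℂ | 0 < z.re ∧ 0 < z.im})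
    (hcont : ContinuousOn g {z : ℂ | 0 ≤ z.re ∧ 0 ≤ z.im})
    (hbound : ∀ z : ℂ, 0 ≤ z.re → 0 ≤ z.im →
      ‖g z‖ ≤ C * Real.exp (a * z.re ^ 2) * (1 + ‖z‖) ^ m)
    (hint : IntegrableOn (fun x : ℝ => ‖g x‖ ^ p) (Ioi (0:ℝ)))
    {σ : ℝ} (hσ : 0 < σ) {φ : ℝ → ℂ}
    (hφm : AEStronglyMeasurable φ (volume.restrict (Ioc σ (σ+1))))
    (hφ1 : ∀ ρ, ‖φ ρ‖ ≤ 1)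
    {ψ : ℝ} (hψ0 : 0 ≤ ψ) (hψθ : ψ ≤ Real.arctan ((σ+1)^2/2)) :
    ‖∫ ρ in Ioc σ (σ+1), φ ρ * g ((ρ:ℂ) * Complex.exp ((ψ:ℂ) * Complex.I))‖ ≤
      2 ^ (m+1) * Real.exp a *
        max (2 * ((∫ x in Ioi (0:ℝ), ‖g (x:ℂ)‖ ^ p) + 1) ^ (1/p)) (C * (2*(σ+1)) ^ m) := by
  -- Notation
  set M₁ : ℝ := ∫ x in Ioi (0:ℝ), ‖g (x:ℂ)‖ ^ p with hM₁def
  have hM₁0 : 0 ≤ M₁ := setIntegral_nonneg measurableSet_Ioi (fun x _ => by positivity)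
  set M : ℝ := 2 * (M₁ + 1) ^ (1/p) with hMdef
  have hM0 : 0 < M := by
    have : (0:ℝ) < (M₁ + 1) ^ (1/p) := Real.rpow_pos_of_pos (by linarith) _
    rw [hMdef]; linarith
  set B₁ : ℝ := max M (C * (2*(σ+1)) ^ m) with hB₁def
  have hB₁0 : 0 < B₁ := lt_of_lt_of_le hM0 (le_max_left _ _)
  set q : ℝ := 1/p with hqdef
  have hp0 : 0 < p := lt_of_lt_of_le one_pos hp
  have hq0 : 0 < q := by rw [hqdef]; positivity
  have hq1 : q ≤ 1 := by rw [hqdef]; rw [div_le_one hp0]; linarith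
  set A : ℝ := a * (σ+1)^2 with hAdef
  have hA0 : 0 < A := by rw [hAdef]; positivity
  set θ : ℝ := Real.arctan ((σ+1)^2/2) with hθdef
  have hθ0 : 0 < θ := by
    rw [hθdef, ← Real.arctan_zero]
    exact Real.arctan_strictMono (by positivity)
  have hθπ : θ < π/2 := Real.arctan_lt_pi_div_two _
  have hcosθ : 0 < Real.cos θ := Real.cos_arctan_pos _
  have hsinθ : 0 ≤ Real.sin θ := Real.sin_nonneg_of_nonneg_of_le_pi hθ0.le
    (by linarith [Real.pi_pos])
  have htan : Real.tan θ = (σ+1)^2/2 := Real.tan_arctan _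
  have hsinid : a * Real.sin (2*θ) = A * Real.cos θ ^ 2 := by
    rw [Real.sin_two_mul]
    have hs : Real.sin θ = (σ+1)^2/2 * Real.cos θ := by
      rw [← htan, Real.tan_eq_sin_div_cos]; field_simp
    rw [hs, hAdef]; ring
  have hsin2θ : Real.sin (2*θ) ≤ 1 := Real.sin_le_one _
  -- The analytic function Φ
  set Φ : ℂ → ℂ := fun w => ∫ ρ in Ioc σ (σ+1), φ ρ * g ((ρ:ℂ) * w) with hΦdef
  have hΦd : DifferentiableOn ℂ Φ {z : ℂ | 0 < z.re ∧ 0 < z.im} :=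
    phi_diff hanal hcont hσ hφm hφ1
  have hΦc : ContinuousOn Φ {z : ℂ | 0 ≤ z.re ∧ 0 ≤ z.im} :=
    phi_cont hcont hσ hφm hφ1
  -- bound of ‖Φ‖ by the integral of ‖g‖
  have hΦle : ∀ w : ℂ, 0 ≤ w.re → 0 ≤ w.im →
      ‖Φ w‖ ≤ ∫ ρ in Ioc σ (σ+1), ‖g ((ρ:ℂ) * w)‖ := by
    intro w hw1 hw2
    have hgc : ContinuousOn (fun ρ : ℝ => ‖g ((ρ:ℂ) * w)‖) (Icc σ (σ+1)) := by
      apply ContinuousOn.norm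
      apply hcont.comp ((Complex.continuous_ofReal.mul continuous_const).continuousOn)
      intro ρ hρ
      exact mul_mem_Qc (hσ.trans_le hρ.1).le ⟨hw1, hw2⟩
    have hgint : IntegrableOn (fun ρ : ℝ => ‖g ((ρ:ℂ) * w)‖) (Ioc σ (σ+1)) :=
      (hgc.integrableOn_Icc).mono_set Ioc_subset_Icc_self
    refine (norm_integral_le_integral_norm _).trans ?_
    apply integral_mono_of_nonneg (Filter.Eventually.of_forall fun ρ => norm_nonneg _) hgint
    filter_upwards with ρ
    rw [norm_mul]
    exact mul_le_of_le_one_left (norm_nonneg _) (hφ1 ρ)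
  -- global bound
  have hΦglob : ∀ w : ℂ, 0 ≤ w.re → 0 ≤ w.im →
      ‖Φ w‖ ≤ C * Real.exp (A * w.re^2) * (1 + (σ+1) * ‖w‖) ^ m := by
    intro w hw1 hw2
    exact (hΦle w hw1 hw2).trans (gseg_bound hC ha hm hcont hbound hσ hw1 hw2)
  -- real axis bound
  have hΦreal : ∀ x : ℝ, 0 < x → ‖Φ (x:ℂ)‖ ≤ M * x ^ (-q) := by
    intro x hx
    have h1 := hΦle (x:ℂ) (by simp [hx.le]) (by simp)
    have e0 : ∀ ρ : ℝ, (ρ:ℂ) * (x:ℂ) = ((ρ * x : ℝ) : ℂ) := fun ρ => by push_cast; ring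
    have e1 : (∫ ρ in Ioc σ (σ+1), ‖g ((ρ:ℂ) * (x:ℂ))‖)
        = ∫ ρ in σ..(σ+1), ‖g (((ρ * x : ℝ)):ℂ)‖ := by
      rw [intervalIntegral.integral_of_le (by linarith)]
      apply setIntegral_congr_fun measurableSet_Ioc
      intro ρ _
      exact congrArg norm (congrArg g (e0 ρ))
    have e2 : (∫ ρ in σ..(σ+1), ‖g (((ρ * x : ℝ)):ℂ)‖)
        = x⁻¹ • ∫ u in σ*x..((σ+1)*x), ‖g ((u:ℝ):ℂ)‖ :=
      intervalIntegral.integral_comp_mul_right (fun u => ‖g ((u:ℝ):ℂ)‖) hx.ne'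
    have e3 : (∫ u in σ*x..((σ+1)*x), ‖g ((u:ℝ):ℂ)‖)
        = ∫ u in Ioc (σ*x) ((σ+1)*x), ‖g ((u:ℝ):ℂ)‖ :=
      intervalIntegral.integral_of_le (by nlinarith)
    have hy := young_seg hp g hcont hint (c := σ*x) (d := (σ+1)*x)
      (by positivity) (by nlinarith)
    have e4 : (σ+1)*x - σ*x = x := by ring
    rw [e4] at hy
    have h5 : x⁻¹ * x ^ (1 - q) = x ^ (-q) := by
      rw [← Real.rpow_neg_one x, ← Real.rpow_add hx]
      congr 1; ring
    have hxq : x⁻¹ * (2 * (M₁ + 1) ^ (1/p) * x ^ (1 - 1/p)) = M * x ^ (-q) := by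
      rw [← hqdef, hMdef]
      linear_combination (2 * (M₁ + 1) ^ q) * h5
    calc ‖Φ (x:ℂ)‖ ≤ ∫ ρ in Ioc σ (σ+1), ‖g ((ρ:ℂ) * (x:ℂ))‖ := h1
      _ = x⁻¹ * ∫ u in Ioc (σ*x) ((σ+1)*x), ‖g ((u:ℝ):ℂ)‖ := by
          rw [e1, e2, e3, smul_eq_mul]
      _ ≤ x⁻¹ * (2 * (M₁ + 1) ^ (1/p) * x ^ (1 - 1/p)) := by
          apply mul_le_mul_of_nonneg_left ?_ (by positivity)
          exact hy
      _ = M * x ^ (-q) := hxq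
  -- the auxiliary exponential factor
  set E : ℂ → ℂ := fun ζ => Complex.I * (a:ℂ) * Complex.exp (2*ζ) + ((q:ℝ):ℂ) * ζ
    - (((q + m : ℝ)):ℂ) * Complex.log (1 + Complex.exp ζ) with hEdef
  set f : ℂ → ℂ := fun ζ => Φ (Complex.exp ζ) * Complex.exp (E ζ) with hfdef
  have hfnorm : ∀ ζ, ‖f ζ‖ = ‖Φ (Complex.exp ζ)‖ * Real.exp ((E ζ).re) := by
    intro ζ
    rw [hfdef]
    simp only []
    rw [norm_mul]
    congr 1
    rw [Complex.norm_exp]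
  have hEre : ∀ ζ : ℂ, (E ζ).re = -(a * (Complex.exp (2*ζ)).im) + q * ζ.re
      - (q+m) * Real.log (‖1 + Complex.exp ζ‖) := by
    intro ζ
    rw [hEdef]
    simp only [Complex.add_re, Complex.sub_re, Complex.mul_re, Complex.I_re, Complex.I_im,
      Complex.ofReal_re, Complex.ofReal_im, Complex.mul_im, Complex.log_re, Complex.log_im]
    ring
  -- basic facts about points of the closed strip
  have hwfacts : ∀ ζ : ℂ, 0 ≤ ζ.im → ζ.im ≤ θ →
      (0 ≤ (Complex.exp ζ).re ∧ 0 ≤ (Complex.exp ζ).im) ∧ 0 < (1 + Complex.exp ζ).re := by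
    intro ζ h0 h1
    have hcos : 0 ≤ Real.cos ζ.im :=
      Real.cos_nonneg_of_mem_Icc ⟨by linarith [Real.pi_pos], by linarith⟩
    have hsin : 0 ≤ Real.sin ζ.im :=
      Real.sin_nonneg_of_nonneg_of_le_pi h0 (by linarith [Real.pi_pos])
    refine ⟨⟨?_, ?_⟩, ?_⟩
    · rw [Complex.exp_re]; positivity
    · rw [Complex.exp_im]; positivity
    · rw [Complex.add_re, Complex.one_re, Complex.exp_re]
      positivity
  have hwopen : ∀ ζ : ℂ, 0 < ζ.im → ζ.im < θ →
      0 < (Complex.exp ζ).re ∧ 0 < (Complex.exp ζ).im := by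
    intro ζ h0 h1
    have hcos : 0 < Real.cos ζ.im :=
      Real.cos_pos_of_mem_Ioo ⟨by linarith [Real.pi_pos], by linarith⟩
    have hsin : 0 < Real.sin ζ.im :=
      Real.sin_pos_of_pos_of_lt_pi h0 (by linarith [Real.pi_pos])
    constructor
    · rw [Complex.exp_re]; positivity
    · rw [Complex.exp_im]; positivity
  have hQoopen : IsOpen {z : ℂ | 0 < z.re ∧ 0 < z.im} :=
    (isOpen_lt continuous_const Complex.continuous_re).inter
      (isOpen_lt continuous_const Complex.continuous_im)
  -- differentiability and continuity of the strip function
  have hfd : DiffContOnCl ℂ f (Complex.im ⁻¹' Ioo 0 θ) := by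
    constructor
    · intro ζ hζ
      apply DifferentiableAt.differentiableWithinAt
      have hmem := hwopen ζ hζ.1 hζ.2
      have hslit : 1 + Complex.exp ζ ∈ Complex.slitPlane := by
        apply Complex.mem_slitPlane_iff.2
        left
        rw [Complex.add_re, Complex.one_re]
        linarith [hmem.1]
      have hΦexp : DifferentiableAt ℂ (fun ζ => Φ (Complex.exp ζ)) ζ := by
        have h1 : DifferentiableAt ℂ Φ (Complex.exp ζ) :=
          hΦd.differentiableAt (hQoopen.mem_nhds hmem)
        exact h1.comp ζ Complex.differentiable_exp.differentiableAt
      have h2 : DifferentiableAt ℂ (fun ζ : ℂ => Complex.exp (2*ζ)) ζ :=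
        ((differentiableAt_id.const_mul (2:ℂ))).cexp
      have h3 : DifferentiableAt ℂ (fun ζ : ℂ => Complex.log (1 + Complex.exp ζ)) ζ :=
        DifferentiableAt.clog
          ((differentiableAt_const _).add Complex.differentiable_exp.differentiableAt) hslit
      have hE : DifferentiableAt ℂ E ζ := by
        rw [hEdef]
        exact (((differentiableAt_const _).mul h2).add
          ((differentiableAt_const _).mul differentiableAt_id)).sub
          ((differentiableAt_const _).mul h3)
      exact hΦexp.mul hE.cexp
    · have hsub2 : closure (Complex.im ⁻¹' Ioo 0 θ) ⊆ Complex.im ⁻¹' Icc 0 θ :=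
        closure_minimal (preimage_mono Ioo_subset_Icc_self)
          (isClosed_Icc.preimage Complex.continuous_im)
      apply ContinuousOn.mono ?_ hsub2
      apply ContinuousOn.mul
      · apply hΦc.comp Complex.continuous_exp.continuousOn
        intro ζ hζ
        exact (hwfacts ζ hζ.1 hζ.2).1
      · apply Complex.continuous_exp.comp_continuousOn
        rw [hEdef]
        apply ContinuousOn.sub
        · apply ContinuousOn.add
          · exact (continuous_const.mul
              (Complex.continuous_exp.comp (continuous_const.mul continuous_id))).continuousOn
          · exact (continuous_const.mul continuous_id).continuousOn
        · apply ContinuousOn.mul continuousOn_const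
          intro ζ hζ
          apply ContinuousAt.continuousWithinAt
          have hslit : 1 + Complex.exp ζ ∈ Complex.slitPlane := by
            apply Complex.mem_slitPlane_iff.2
            left
            exact (hwfacts ζ hζ.1 hζ.2).2
          have hc1 : ContinuousAt (fun ζ : ℂ => 1 + Complex.exp ζ) ζ :=
            (continuous_const.add Complex.continuous_exp).continuousAt
          exact hc1.clog hslit
  -- growth of f in the strip
  have hgrow : ∀ ζ : ℂ, 0 ≤ ζ.im → ζ.im ≤ θ → ‖f ζ‖ ≤
      C * Real.exp ((A + a + m*(σ+1) + 1) * Real.exp (2 * |ζ.re|)) := by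
    intro ζ h0 h1
    have hx : 0 < Real.exp ζ.re := Real.exp_pos _
    have hw := (hwfacts ζ h0 h1).1
    have hone := one_add_facts (w := Complex.exp ζ) hw.1
    have habs : ‖Complex.exp ζ‖ = Real.exp ζ.re := by
      rw [Complex.norm_exp]
    have hexp2u : Real.exp ζ.re * Real.exp ζ.re = Real.exp (2*ζ.re) := by
      rw [← Real.exp_add]; ring_nf
    -- ‖Φ (exp ζ)‖ bound
    have hre2 : A * (Complex.exp ζ).re^2 ≤ A * Real.exp (2*ζ.re) := by
      apply mul_le_mul_of_nonneg_left ?_ hA0.le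
      have h2 := Complex.abs_re_le_norm (Complex.exp ζ)
      rw [Complex.norm_exp] at h2
      nlinarith [abs_nonneg (Complex.exp ζ).re, le_abs_self (Complex.exp ζ).re,
        neg_abs_le (Complex.exp ζ).re]
    have hpoly : (1 + (σ+1) * ‖Complex.exp ζ‖) ^ m ≤
        Real.exp (m * (σ+1) * Real.exp ζ.re) := by
      rw [habs, Real.rpow_def_of_pos (by positivity)]
      apply Real.exp_le_exp.2
      have hlog : Real.log (1 + (σ+1)*Real.exp ζ.re) ≤ (σ+1)*Real.exp ζ.re := by
        have := Real.log_le_sub_one_of_pos (x := 1 + (σ+1)*Real.exp ζ.re) (by positivity)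
        linarith
      calc Real.log (1 + (σ+1)*Real.exp ζ.re) * m ≤ ((σ+1)*Real.exp ζ.re) * m :=
            mul_le_mul_of_nonneg_right hlog hm
        _ = m * (σ+1) * Real.exp ζ.re := by ring
    have hΦb : ‖Φ (Complex.exp ζ)‖ ≤
        C * Real.exp (A * Real.exp (2*ζ.re)) * Real.exp (m * (σ+1) * Real.exp ζ.re) := by
      refine (hΦglob _ hw.1 hw.2).trans ?_
      apply mul_le_mul (mul_le_mul le_rfl (Real.exp_le_exp.2 hre2) (by positivity) hC.le)
        hpoly (by positivity) (by positivity)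
    -- exp((E ζ).re) bound
    have hEb : Real.exp ((E ζ).re) ≤ Real.exp (a * Real.exp (2*ζ.re) + |ζ.re|) := by
      apply Real.exp_le_exp.2
      rw [hEre]
      have him : -(a * (Complex.exp (2*ζ)).im) ≤ a * Real.exp (2*ζ.re) := by
        have h2 := Complex.abs_im_le_norm (Complex.exp (2*ζ))
        rw [Complex.norm_exp] at h2
        have h3 : (2*ζ).re = 2*ζ.re := by simp
        rw [h3] at h2
        have h4 := neg_abs_le (Complex.exp (2*ζ)).im
        nlinarith [abs_nonneg (Complex.exp (2*ζ)).im]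
      have hqu : q * ζ.re ≤ |ζ.re| := by
        have h5 := le_abs_self ζ.re
        have h6 := abs_nonneg ζ.re
        nlinarith
      have hlogn : 0 ≤ (q+m) * Real.log (‖1 + Complex.exp ζ‖) := by
        apply mul_nonneg (by linarith)
        apply Real.log_nonneg
        exact hone.1
      linarith
    -- assemble
    have hfin : A * Real.exp (2*ζ.re) + m * (σ+1) * Real.exp ζ.re
        + (a * Real.exp (2*ζ.re) + |ζ.re|)
        ≤ (A + a + m*(σ+1) + 1) * Real.exp (2 * |ζ.re|) := by
      have k1 : Real.exp (2*ζ.re) ≤ Real.exp (2*|ζ.re|) :=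
        Real.exp_le_exp.2 (by linarith [le_abs_self ζ.re])
      have k2 : Real.exp ζ.re ≤ Real.exp (2*|ζ.re|) :=
        Real.exp_le_exp.2 (by linarith [le_abs_self ζ.re, abs_nonneg ζ.re])
      have k3 : |ζ.re| ≤ Real.exp (2*|ζ.re|) := by
        linarith [Real.add_one_le_exp (2*|ζ.re|), abs_nonneg ζ.re]
      have k4 : A * Real.exp (2*ζ.re) ≤ A * Real.exp (2*|ζ.re|) :=
        mul_le_mul_of_nonneg_left k1 hA0.le
      have k5 : a * Real.exp (2*ζ.re) ≤ a * Real.exp (2*|ζ.re|) :=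
        mul_le_mul_of_nonneg_left k1 ha.le
      have k6 : m * (σ+1) * Real.exp ζ.re ≤ m * (σ+1) * Real.exp (2*|ζ.re|) :=
        mul_le_mul_of_nonneg_left k2 (by positivity)
      linarith
    calc ‖f ζ‖ = ‖Φ (Complex.exp ζ)‖ * Real.exp ((E ζ).re) := hfnorm ζ
      _ ≤ (C * Real.exp (A * Real.exp (2*ζ.re)) * Real.exp (m * (σ+1) * Real.exp ζ.re))
          * Real.exp (a * Real.exp (2*ζ.re) + |ζ.re|) :=
            mul_le_mul hΦb hEb (Real.exp_pos _).le (by positivity)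
      _ = C * Real.exp (A * Real.exp (2*ζ.re) + m * (σ+1) * Real.exp ζ.re
          + (a * Real.exp (2*ζ.re) + |ζ.re|)) := by
            simp only [Real.exp_add]; ring
      _ ≤ C * Real.exp ((A + a + m*(σ+1) + 1) * Real.exp (2 * |ζ.re|)) := by
            apply mul_le_mul_of_nonneg_left (Real.exp_le_exp.2 hfin) hC.le
  have hBgrow : ∃ c < π/(θ - 0), ∃ B, f =O[Filter.comap (_root_.abs ∘ Complex.re)
      Filter.atTop ⊓ Filter.principal (Complex.im ⁻¹' Ioo 0 θ)]
      fun ζ => Real.exp (B * Real.exp (c * |ζ.re|)) := by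
    refine ⟨2, ?_, A + a + m*(σ+1) + 1, ?_⟩
    · rw [sub_zero, lt_div_iff₀ hθ0]
      linarith
    · apply Asymptotics.IsBigO.of_bound C
      rw [Filter.eventually_inf_principal]
      filter_upwards with ζ hζ
      have hb := hgrow ζ hζ.1.le hζ.2.le
      rw [Real.norm_eq_abs, Real.abs_exp]
      exact hb
  -- boundary estimate on the real axis
  have hle0 : ∀ ζ : ℂ, ζ.im = 0 → ‖f ζ‖ ≤ B₁ := by
    intro ζ him
    have hζeq : ζ = ((ζ.re : ℝ) : ℂ) := Complex.ext rfl (by simp [him])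
    set x : ℝ := Real.exp ζ.re with hxdef
    have hx : 0 < x := Real.exp_pos _
    have hexpζ : Complex.exp ζ = ((x : ℝ) : ℂ) := by
      rw [hxdef, Complex.ofReal_exp]
      exact congrArg Complex.exp hζeq
    have h2im : (Complex.exp (2*ζ)).im = 0 := by
      rw [Complex.exp_im, show (2*ζ).im = 2*ζ.im from by simp, him]
      simp
    have habs1 : ‖1 + Complex.exp ζ‖ = 1 + x := by
      rw [hexpζ, show (1:ℂ) + ((x:ℝ):ℂ) = (((1+x : ℝ)):ℂ) from by push_cast; ring,
        Complex.norm_real, Real.norm_eq_abs, abs_of_pos (by linarith)]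
    have hEval : Real.exp ((E ζ).re) = x^q * (1+x) ^ (-(q+m)) := by
      rw [hEre ζ, h2im, habs1]
      rw [show -(a * 0) + q * ζ.re - (q+m) * Real.log (1+x)
          = q*ζ.re + Real.log (1+x) * (-(q+m)) from by ring]
      rw [Real.exp_add]
      congr 1
      · rw [Real.rpow_def_of_pos hx, hxdef, Real.log_exp]
        congr 1; ring
      · rw [Real.rpow_def_of_pos (by linarith : (0:ℝ) < 1+x)]
    have hxx : x^(-q) * x^q = 1 := by
      rw [← Real.rpow_add hx]; simp
    have hone1 : (1+x:ℝ) ^ (-(q+m)) ≤ 1 :=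
      Real.rpow_le_one_of_one_le_of_nonpos (by linarith) (by linarith)
    calc ‖f ζ‖ = ‖Φ (Complex.exp ζ)‖ * Real.exp ((E ζ).re) := hfnorm ζ
      _ ≤ (M * x^(-q)) * Real.exp ((E ζ).re) := by
          apply mul_le_mul_of_nonneg_right ?_ (Real.exp_pos _).le
          rw [hexpζ]
          exact hΦreal x hx
      _ = M * ((x^(-q) * x^q) * (1+x) ^ (-(q+m))) := by rw [hEval]; ring
      _ = M * (1+x) ^ (-(q+m)) := by rw [hxx]; ring
      _ ≤ M * 1 := mul_le_mul_of_nonneg_left hone1 hM0.le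
      _ ≤ B₁ := by rw [mul_one, hB₁def]; exact le_max_left _ _
  -- boundary estimate on the ray at angle θ
  have hleθ : ∀ ζ : ℂ, ζ.im = θ → ‖f ζ‖ ≤ B₁ := by
    intro ζ him
    have h0le : 0 ≤ ζ.im := him ▸ hθ0.le
    have hleθ' : ζ.im ≤ θ := le_of_eq him
    have hw := (hwfacts ζ h0le hleθ').1
    have hone := one_add_facts (w := Complex.exp ζ) hw.1
    set x : ℝ := Real.exp ζ.re with hxdef
    have hx : 0 < x := Real.exp_pos _
    have habs : ‖Complex.exp ζ‖ = x := by rw [Complex.norm_exp]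
    set N : ℝ := ‖1 + Complex.exp ζ‖ with hNdef
    have hNnorm : ‖(1:ℂ) + Complex.exp ζ‖ = N := by rfl
    have hN1 : 1 ≤ N := by rw [← hNnorm]; exact hone.1
    have hN0 : 0 < N := lt_of_lt_of_le one_pos hN1
    have hxN : x ≤ N := by rw [← habs, ← hNnorm]; exact hone.2.1
    have hN2 : 1 + x ≤ 2*N := by rw [← habs, ← hNnorm]; exact hone.2.2
    have hwre : (Complex.exp ζ).re = x * Real.cos θ := by
      rw [Complex.exp_re, him]
    have h2im : (Complex.exp (2*ζ)).im = Real.exp (2*ζ.re) * Real.sin (2*θ) := by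
      rw [Complex.exp_im, show (2*ζ).re = 2*ζ.re from by simp,
        show (2*ζ).im = 2*ζ.im from by simp, him]
    have hx2 : Real.exp (2*ζ.re) = x^2 := by
      rw [hxdef, sq, ← Real.exp_add]
      congr 1; ring
    have hcancel : A * (Complex.exp ζ).re^2 + -(a * (Complex.exp (2*ζ)).im) = 0 := by
      rw [hwre, h2im, hx2]
      linear_combination (-(x^2)) * hsinid
    have hexp1 : Real.exp (A * (Complex.exp ζ).re^2)
        * Real.exp (-(a * (Complex.exp (2*ζ)).im)) = 1 := by
      rw [← Real.exp_add, hcancel, Real.exp_zero]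
    have hEval : Real.exp ((E ζ).re) =
        Real.exp (-(a * (Complex.exp (2*ζ)).im)) * (x^q * N^(-q)) * N^(-m) := by
      rw [hEre ζ]
      rw [show -(a * (Complex.exp (2*ζ)).im) + q * ζ.re - (q+m) * Real.log N
          = -(a * (Complex.exp (2*ζ)).im) + (ζ.re * q + Real.log N * (-q))
            + Real.log N * (-m) from by ring]
      rw [Real.exp_add, Real.exp_add, Real.exp_add]
      have e1 : Real.exp (ζ.re * q) = x ^ q := by
        rw [Real.rpow_def_of_pos hx, hxdef, Real.log_exp]
      have e2 : Real.exp (Real.log N * -q) = N ^ (-q) :=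
        (Real.rpow_def_of_pos hN0 _).symm
      have e3 : Real.exp (Real.log N * -m) = N ^ (-m) :=
        (Real.rpow_def_of_pos hN0 _).symm
      rw [e1, e2, e3]
    have t1 : x^q * N^(-q) ≤ 1 := by
      rw [Real.rpow_neg hN0.le]
      have h6 : x^q ≤ N^q := Real.rpow_le_rpow hx.le hxN hq0.le
      have h7 : 0 < N^q := Real.rpow_pos_of_pos hN0 _
      calc x^q * (N^q)⁻¹ ≤ N^q * (N^q)⁻¹ :=
            mul_le_mul_of_nonneg_right h6 (by positivity)
        _ = 1 := mul_inv_cancel₀ h7.ne'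
    have t2 : N^(-m) ≤ 2^m * (1+x)^(-m) := by
      have hhalf : 0 < (1+x)/2 := by positivity
      have hle : (1+x)/2 ≤ N := by linarith
      refine (Real.rpow_le_rpow_of_nonpos hhalf hle (neg_nonpos.2 hm)).trans_eq ?_
      rw [Real.rpow_neg hhalf.le, Real.rpow_neg (by positivity : (0:ℝ) ≤ 1+x),
        Real.div_rpow (by positivity) (by norm_num : (0:ℝ) ≤ 2), inv_div]
      ring
    have t3 : (1 + (σ+1)*x) ^ m ≤ (σ+1)^m * (1+x)^m := by
      rw [← Real.mul_rpow (by positivity) (by positivity)]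
      apply Real.rpow_le_rpow (by positivity) ?_ hm
      have hexpand : (σ+1)*(1+x) = 1 + (σ+1)*x + σ := by ring
      linarith
    have t4 : (1+x:ℝ)^m * (1+x)^(-m) = 1 := by
      rw [← Real.rpow_add (by positivity : (0:ℝ) < 1+x)]; simp
    have hpoly2 : (1 + (σ+1)*x) ^ m * (x^q * N^(-q)) * N^(-m) ≤ (2*(σ+1))^m := by
      calc (1 + (σ+1)*x) ^ m * (x^q * N^(-q)) * N^(-m)
          ≤ ((σ+1)^m * (1+x)^m) * 1 * (2^m * (1+x)^(-m)) := by
            apply mul_le_mul (mul_le_mul t3 t1 (by positivity) (by positivity)) t2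
              (by positivity) (by positivity)
        _ = (2*(σ+1))^m * ((1+x)^m * (1+x)^(-m)) := by
            rw [Real.mul_rpow (by norm_num : (0:ℝ) ≤ 2) (by positivity : (0:ℝ) ≤ σ+1)]
            ring
        _ = (2*(σ+1))^m := by rw [t4, mul_one]
    calc ‖f ζ‖ = ‖Φ (Complex.exp ζ)‖ * Real.exp ((E ζ).re) := hfnorm ζ
      _ ≤ (C * Real.exp (A * (Complex.exp ζ).re^2) * (1 + (σ+1)*x) ^ m)
            * Real.exp ((E ζ).re) := by
          apply mul_le_mul_of_nonneg_right ?_ (Real.exp_pos _).le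
          have h8 := hΦglob (Complex.exp ζ) hw.1 hw.2
          rw [habs] at h8
          exact h8
      _ = C * (Real.exp (A * (Complex.exp ζ).re^2)
            * Real.exp (-(a * (Complex.exp (2*ζ)).im)))
            * ((1 + (σ+1)*x) ^ m * (x^q * N^(-q)) * N^(-m)) := by
          rw [hEval]; ring
      _ = C * ((1 + (σ+1)*x) ^ m * (x^q * N^(-q)) * N^(-m)) := by
          rw [hexp1]; ring
      _ ≤ C * (2*(σ+1))^m := mul_le_mul_of_nonneg_left hpoly2 hC.le
      _ ≤ B₁ := by rw [hB₁def]; exact le_max_right _ _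
  -- apply Phragmén–Lindelöf in the strip
  set ζ₀ : ℂ := (ψ:ℂ) * Complex.I with hζ₀def
  have hζ₀im : ζ₀.im = ψ := by simp [hζ₀def]
  have hζ₀re : ζ₀.re = 0 := by simp [hζ₀def]
  have hmain : ‖f ζ₀‖ ≤ B₁ := by
    apply PhragmenLindelof.horizontal_strip hfd hBgrow hle0 hleθ
    · rw [hζ₀im]; exact hψ0
    · rw [hζ₀im]; exact hψθ
  -- unravel the value at ζ₀
  have hEψ : -(E ζ₀).re ≤ a + (q+m) * Real.log 2 := by
    rw [hEre]
    have h2im : (Complex.exp (2*ζ₀)).im = Real.sin (2*ψ) := by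
      rw [Complex.exp_im, show (2*ζ₀).re = 0 from by simp [hζ₀def],
        show (2*ζ₀).im = 2*ψ from by simp [hζ₀def]]
      simp
    rw [h2im, hζ₀re]
    have hsin : Real.sin (2*ψ) ≤ 1 := Real.sin_le_one _
    have habs2 : ‖1 + Complex.exp ζ₀‖ ≤ 2 := by
      calc ‖1 + Complex.exp ζ₀‖
          ≤ ‖(1:ℂ)‖ + ‖Complex.exp ζ₀‖ := norm_add_le _ _
        _ = 1 + Real.exp ζ₀.re := by rw [Complex.norm_exp, norm_one]
        _ = 2 := by rw [hζ₀re, Real.exp_zero]; norm_num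
    have hpos2 : 0 < ‖1 + Complex.exp ζ₀‖ := by
      have := (one_add_facts (w := Complex.exp ζ₀)
        ((hwfacts ζ₀ (hζ₀im ▸ hψ0) (hζ₀im ▸ hψθ)).1.1)).1
      linarith
    have hlog2 : Real.log (‖1 + Complex.exp ζ₀‖) ≤ Real.log 2 :=
      Real.log_le_log hpos2 habs2
    have hq2 : 0 ≤ q + m := by linarith
    have h9 : (q+m) * Real.log (‖1 + Complex.exp ζ₀‖) ≤ (q+m) * Real.log 2 :=
      mul_le_mul_of_nonneg_left hlog2 hq2
    have h10 : a * Real.sin (2*ψ) ≤ a := by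
      calc a * Real.sin (2*ψ) ≤ a * 1 := mul_le_mul_of_nonneg_left hsin ha.le
        _ = a := mul_one a
    linarith
  have hΦψ : ‖Φ (Complex.exp ζ₀)‖ ≤ B₁ * Real.exp (a + (q+m) * Real.log 2) := by
    have h1 := hmain
    rw [hfnorm] at h1
    have hepos : 0 < Real.exp ((E ζ₀).re) := Real.exp_pos _
    have h2 : ‖Φ (Complex.exp ζ₀)‖ ≤ B₁ / Real.exp ((E ζ₀).re) := by
      rw [le_div_iff₀ hepos]; exact h1
    refine h2.trans ?_
    rw [div_eq_mul_inv, ← Real.exp_neg]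
    exact mul_le_mul_of_nonneg_left (Real.exp_le_exp.2 hEψ) hB₁0.le
  have hexpsimp : Real.exp (a + (q+m) * Real.log 2) ≤ Real.exp a * 2^(m+1) := by
    rw [Real.exp_add]
    apply mul_le_mul_of_nonneg_left ?_ (Real.exp_pos a).le
    have h11 : Real.exp ((q+m) * Real.log 2) = (2:ℝ)^(q+m) := by
      rw [Real.rpow_def_of_pos (by norm_num : (0:ℝ) < 2)]
      congr 1; ring
    rw [h11]
    exact Real.rpow_le_rpow_of_exponent_le (by norm_num) (by linarith)
  calc ‖∫ ρ in Ioc σ (σ+1), φ ρ * g ((ρ:ℂ) * Complex.exp ((ψ:ℂ) * Complex.I))‖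
      = ‖Φ (Complex.exp ζ₀)‖ := rfl
    _ ≤ B₁ * Real.exp (a + (q+m) * Real.log 2) := hΦψ
    _ ≤ B₁ * (Real.exp a * 2^(m+1)) := mul_le_mul_of_nonneg_left hexpsimp hB₁0.le
    _ = 2^(m+1) * Real.exp a * B₁ := by ring





end Key

end PLQuad

open PLQuad in
set_option maxHeartbeats 2000000 in
/-- **Phragmén–Lindelöf estimate on the first quadrant** (Lemma 2.1).
If `g` is analytic on the open first quadrant `Q`, continuous on its closure,
satisfies `|g(z)| ≤ C e^{a (Re z)²} (1+|z|)^m` there and is `L^p` on the positive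
real axis, then the integrals of `|g|` over segments `[σ, σ+1]` along any ray
`ρ ↦ ρ e^{iψ}`, `ψ ∈ [0, π/2]`, grow at most like `max{e^a, (σ+1)^{1/p}} (σ+2)^{2m}`. -/
theorem stmt_0 (g : ℂ → ℂ) (C a m p : ℝ)
    (hC : 0 < C) (ha : 0 < a) (hm : 0 ≤ m) (hp : 1 ≤ p)
    (hanal : DifferentiableOn ℂ g {z : ℂ | 0 < z.re ∧ 0 < z.im})
    (hcont : ContinuousOn g {z : ℂ | 0 ≤ z.re ∧ 0 ≤ z.im})
    (hbound : ∀ z : ℂ, 0 ≤ z.re → 0 ≤ z.im →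
      ‖g z‖ ≤ C * Real.exp (a * z.re ^ 2) * (1 + ‖z‖) ^ m)
    (hint : IntegrableOn (fun x : ℝ => ‖g x‖ ^ p) (Ioi (0 : ℝ))) :
    ∃ C' : ℝ, 0 < C' ∧ ∀ ψ ∈ Icc (0 : ℝ) (π / 2), ∀ σ : ℝ, 0 < σ →
      (∫ ρ in Ioc σ (σ + 1), ‖g (ρ * Complex.exp (ψ * Complex.I))‖) ≤
        C' * max (Real.exp a) ((σ + 1) ^ (1 / p)) * (σ + 2) ^ (2 * m) := by
  set M₁ : ℝ := ∫ x in Ioi (0:ℝ), ‖g (x:ℂ)‖ ^ p with hM₁def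
  have hM₁0 : 0 ≤ M₁ := setIntegral_nonneg measurableSet_Ioi (fun x _ => by positivity)
  set M : ℝ := 2 * (M₁ + 1) ^ (1/p) with hMdef
  have hM0 : 0 < M := by
    have : (0:ℝ) < (M₁ + 1) ^ (1/p) := Real.rpow_pos_of_pos (by linarith) _
    rw [hMdef]; linarith
  have h2m : (0:ℝ) < 2 ^ m := Real.rpow_pos_of_pos (by norm_num) _
  have h2m1 : (0:ℝ) < 2 ^ (m+1) := Real.rpow_pos_of_pos (by norm_num) _
  set K : ℝ := 2 ^ (m+1) * Real.exp a * (M + C * 2 ^ m) + C * Real.exp a with hKdef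
  have hK0 : 0 < K := by
    have h1 : 0 < C * Real.exp a := by positivity
    have h2 : 0 ≤ 2 ^ (m+1) * Real.exp a * (M + C * 2 ^ m) := by positivity
    rw [hKdef]; linarith
  refine ⟨K, hK0, ?_⟩
  rintro ψ ⟨hψ0, hψπ⟩ σ hσ
  set θ : ℝ := Real.arctan ((σ+1)^2/2) with hθdef
  have hθ0 : 0 < θ := by
    rw [hθdef, ← Real.arctan_zero]
    exact Real.arctan_strictMono (by positivity)
  have hθπ : θ < π/2 := Real.arctan_lt_pi_div_two _
  have hσ2 : (1:ℝ) ≤ σ + 2 := by linarith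
  have hσ2m : (1:ℝ) ≤ (σ+2) ^ m := by
    calc (1:ℝ) = 1 ^ m := (Real.one_rpow m).symm
      _ ≤ (σ+2) ^ m := Real.rpow_le_rpow (by norm_num) hσ2 hm
  -- it suffices to prove the bound `K * (σ+2)^m`
  have hsuff : ∀ V : ℝ, V ≤ K * (σ+2) ^ m →
      V ≤ K * max (Real.exp a) ((σ + 1) ^ (1 / p)) * (σ + 2) ^ (2 * m) := by
    intro V hV
    refine hV.trans ?_
    have hmax : (1:ℝ) ≤ max (Real.exp a) ((σ + 1) ^ (1 / p)) :=
      le_trans (Real.one_le_exp ha.le) (le_max_left _ _)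
    have hpow : (σ+2) ^ m ≤ (σ+2) ^ (2*m) :=
      Real.rpow_le_rpow_of_exponent_le hσ2 (by linarith)
    calc K * (σ+2) ^ m = K * 1 * (σ+2) ^ m := by ring
      _ ≤ K * max (Real.exp a) ((σ + 1) ^ (1 / p)) * (σ + 2) ^ (2 * m) := by
          apply mul_le_mul (mul_le_mul le_rfl hmax zero_le_one hK0.le) hpow
            (by positivity) (by positivity)
  rcases le_or_gt ψ θ with hcase | hcase
  · -- Phragmén–Lindelöf regime
    set z : ℝ → ℂ := fun ρ => g ((ρ:ℂ) * Complex.exp ((ψ:ℂ) * Complex.I)) with hzdef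
    set φ : ℝ → ℂ := fun ρ => (starRingEnd ℂ) (z ρ) / ((‖z ρ‖ : ℝ) : ℂ) with hφdef
    have hφ1 : ∀ ρ, ‖φ ρ‖ ≤ 1 := by
      intro ρ
      by_cases h : z ρ = 0
      · simp [hφdef, h]
      · rw [hφdef]
        simp only []
        rw [norm_div, RCLike.norm_conj, Complex.norm_real, Real.norm_eq_abs,
          _root_.abs_of_nonneg (norm_nonneg _), div_self (norm_ne_zero_iff.2 h)]
    have hwq : 0 ≤ (Complex.exp ((ψ:ℂ) * Complex.I)).re ∧
        0 ≤ (Complex.exp ((ψ:ℂ) * Complex.I)).im := by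
      rw [Complex.exp_re, Complex.exp_im]
      have h1 : ((ψ:ℂ) * Complex.I).re = 0 := by simp
      have h2 : ((ψ:ℂ) * Complex.I).im = ψ := by simp
      rw [h1, h2, Real.exp_zero, one_mul, one_mul]
      constructor
      · exact Real.cos_nonneg_of_mem_Icc ⟨by linarith [Real.pi_pos], hψπ⟩
      · exact Real.sin_nonneg_of_nonneg_of_le_pi hψ0 (by linarith [Real.pi_pos])
    have hzc : ContinuousOn z (Ioc σ (σ+1)) := by
      rw [hzdef]
      apply hcont.comp ((Complex.continuous_ofReal.mul continuous_const).continuousOn)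
      intro ρ hρ
      exact mul_mem_Qc (hσ.trans hρ.1).le hwq
    have hzm : AEStronglyMeasurable z (volume.restrict (Ioc σ (σ+1))) :=
      hzc.aestronglyMeasurable measurableSet_Ioc
    have hφm : AEStronglyMeasurable φ (volume.restrict (Ioc σ (σ+1))) := by
      rw [hφdef]
      simp only [div_eq_mul_inv]
      apply AEStronglyMeasurable.mul
      · exact (Complex.continuous_conj.comp_aestronglyMeasurable hzm)
      · apply AEMeasurable.aestronglyMeasurable
        apply AEMeasurable.inv
        exact (Complex.measurable_ofReal.comp measurable_norm).comp_aemeasurable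
          hzm.aemeasurable
    have hkey := key hC ha hm hp hanal hcont hbound hint hσ hφm hφ1 hψ0 hcase
    -- rewrite the integral
    have hid : ∀ ρ : ℝ, φ ρ * z ρ = ((‖z ρ‖ : ℝ) : ℂ) := by
      intro ρ
      by_cases h : z ρ = 0
      · simp [hφdef, h]
      · have hn : ((‖z ρ‖ : ℝ) : ℂ) ≠ 0 :=
          Complex.ofReal_ne_zero.2 (norm_ne_zero_iff.2 h)
        rw [hφdef]
        simp only []
        rw [div_mul_eq_mul_div, mul_comm ((starRingEnd ℂ) (z ρ)) (z ρ), Complex.mul_conj,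
          div_eq_iff hn, ← Complex.ofReal_mul]
        exact congrArg Complex.ofReal
          (by rw [Complex.normSq_eq_norm_sq]; ring)
    have hint_eq : (∫ ρ in Ioc σ (σ+1), φ ρ * z ρ)
        = ((∫ ρ in Ioc σ (σ+1), ‖z ρ‖ : ℝ) : ℂ) := by
      rw [show (fun ρ => φ ρ * z ρ) = (fun ρ => ((‖z ρ‖ : ℝ) : ℂ)) from funext hid]
      exact integral_ofReal
    have hnn : 0 ≤ ∫ ρ in Ioc σ (σ+1), ‖z ρ‖ :=
      integral_nonneg (fun ρ => norm_nonneg _)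
    have hLHS : (∫ ρ in Ioc σ (σ+1), ‖z ρ‖)
        = ‖∫ ρ in Ioc σ (σ+1), φ ρ * z ρ‖ := by
      rw [hint_eq, Complex.norm_real, Real.norm_eq_abs, _root_.abs_of_nonneg hnn]
    -- assemble
    have hmax2 : max M (C * (2*(σ+1)) ^ m) ≤ (M + C * 2 ^ m) * (σ+2) ^ m := by
      have hMle : M ≤ M * (σ+2) ^ m := le_mul_of_one_le_right hM0.le hσ2m
      have hCle : C * (2*(σ+1)) ^ m ≤ C * 2 ^ m * (σ+2) ^ m := by
        rw [Real.mul_rpow (by norm_num : (0:ℝ) ≤ 2) (by positivity : (0:ℝ) ≤ σ+1),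
          ← mul_assoc]
        apply mul_le_mul_of_nonneg_left ?_ (by positivity)
        exact Real.rpow_le_rpow (by positivity) (by linarith) hm
      apply max_le
      · calc M ≤ M * (σ+2) ^ m := hMle
          _ ≤ (M + C * 2 ^ m) * (σ+2) ^ m := by
            apply mul_le_mul_of_nonneg_right ?_ (by positivity)
            have : (0:ℝ) ≤ C * 2 ^ m := by positivity
            linarith
      · calc C * (2*(σ+1)) ^ m ≤ C * 2 ^ m * (σ+2) ^ m := hCle
          _ ≤ (M + C * 2 ^ m) * (σ+2) ^ m := by
            apply mul_le_mul_of_nonneg_right ?_ (by positivity)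
            linarith
    apply hsuff
    calc (∫ ρ in Ioc σ (σ + 1), ‖g (ρ * Complex.exp (ψ * Complex.I))‖)
        = ‖∫ ρ in Ioc σ (σ+1), φ ρ * z ρ‖ := hLHS
      _ ≤ 2 ^ (m+1) * Real.exp a * max M (C * (2*(σ+1)) ^ m) := hkey
      _ ≤ 2 ^ (m+1) * Real.exp a * ((M + C * 2 ^ m) * (σ+2) ^ m) := by
          apply mul_le_mul_of_nonneg_left hmax2 (by positivity)
      _ ≤ K * (σ+2) ^ m := by
          rw [hKdef]
          have h1 : 0 ≤ C * Real.exp a * (σ+2) ^ m := by positivity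
          nlinarith [h1]
  · -- direct regime: `θ ≤ ψ ≤ π/2`
    have hcosθ : 0 < Real.cos θ := Real.cos_arctan_pos _
    have htan : Real.tan θ = (σ+1)^2/2 := Real.tan_arctan _
    have hsinid : a * Real.sin (2*θ) = a * (σ+1)^2 * Real.cos θ ^ 2 := by
      rw [Real.sin_two_mul]
      have hs : Real.sin θ = (σ+1)^2/2 * Real.cos θ := by
        rw [← htan, Real.tan_eq_sin_div_cos]; field_simp
      rw [hs]; ring
    have hwq : 0 ≤ (Complex.exp ((ψ:ℂ) * Complex.I)).re ∧
        0 ≤ (Complex.exp ((ψ:ℂ) * Complex.I)).im := by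
      rw [Complex.exp_re, Complex.exp_im]
      have h1 : ((ψ:ℂ) * Complex.I).re = 0 := by simp
      have h2 : ((ψ:ℂ) * Complex.I).im = ψ := by simp
      rw [h1, h2, Real.exp_zero, one_mul, one_mul]
      constructor
      · exact Real.cos_nonneg_of_mem_Icc ⟨by linarith [Real.pi_pos], hψπ⟩
      · exact Real.sin_nonneg_of_nonneg_of_le_pi hψ0 (by linarith [Real.pi_pos])
    have hgb := gseg_bound hC ha hm hcont hbound hσ hwq.1 hwq.2
    have hre : (Complex.exp ((ψ:ℂ) * Complex.I)).re = Real.cos ψ := by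
      rw [Complex.exp_re]
      have h1 : ((ψ:ℂ) * Complex.I).re = 0 := by simp
      have h2 : ((ψ:ℂ) * Complex.I).im = ψ := by simp
      rw [h1, h2, Real.exp_zero, one_mul]
    have hnormw : ‖Complex.exp ((ψ:ℂ) * Complex.I)‖ = 1 := by
      rw [Complex.norm_exp]
      have h1 : ((ψ:ℂ) * Complex.I).re = 0 := by simp
      rw [h1, Real.exp_zero]
    rw [hre, hnormw] at hgb
    -- exponent bound
    have hcosle : Real.cos ψ ≤ Real.cos θ := by
      apply Real.cos_le_cos_of_nonneg_of_le_pi hθ0.le (by linarith [Real.pi_pos]) hcase.le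
    have hcosψ : 0 ≤ Real.cos ψ :=
      Real.cos_nonneg_of_mem_Icc ⟨by linarith [Real.pi_pos], hψπ⟩
    have hexple : a * (σ+1)^2 * Real.cos ψ ^ 2 ≤ a := by
      have h3 : Real.cos ψ ^ 2 ≤ Real.cos θ ^ 2 := by nlinarith
      have h4 : a * (σ+1)^2 * Real.cos ψ ^ 2 ≤ a * (σ+1)^2 * Real.cos θ ^ 2 := by
        apply mul_le_mul_of_nonneg_left h3 (by positivity)
      have h5 : Real.sin (2*θ) ≤ 1 := Real.sin_le_one _
      have h6 : a * Real.sin (2*θ) ≤ a := by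
        calc a * Real.sin (2*θ) ≤ a * 1 := mul_le_mul_of_nonneg_left h5 ha.le
          _ = a := mul_one a
      linarith [hsinid]
    apply hsuff
    calc (∫ ρ in Ioc σ (σ + 1), ‖g (ρ * Complex.exp (ψ * Complex.I))‖)
        ≤ C * Real.exp (a * (σ+1)^2 * Real.cos ψ ^ 2) * (1 + (σ+1) * 1) ^ m := hgb
      _ ≤ C * Real.exp a * (σ+2) ^ m := by
          apply mul_le_mul (mul_le_mul le_rfl (Real.exp_le_exp.2 hexple)
            (by positivity) hC.le) ?_ (by positivity) (by positivity)
          apply Real.rpow_le_rpow (by positivity) (by linarith) hm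
      _ ≤ K * (σ+2) ^ m := by
          apply mul_le_mul_of_nonneg_right ?_ (by positivity)
          rw [hKdef]
          have h2 : 0 ≤ 2 ^ (m+1) * Real.exp a * (M + C * 2 ^ m) := by positivity
          linarith
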